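/- Assume r ≥ n and A is generic. Then: (1) the set {δ_H^{r-n+1} : H ∈ A^{(n-1)}} is a K-basis of the space Σ_{|α|=r-n+1} K∂^α of constant-coefficient operators homogeneous of order r-n+1; (2) the set {P_H : H ∈ A^{(n-1)}} is a K-basis of the space S_{r-n+1} of homogeneous polynomials of degree r-n+1. -/

import Mathlib

open MvPolynomial

/-- The linear form `Σ v_j x_j` with coefficient vector `v`. -/
noncomputable def lf {K : Type*} [Field K] {n : ℕ} (v : Fin n → K) :
    MvPolynomial (Fin n) K :=
  ∑ j, MvPolynomial.C (v j) * MvPolynomial.X j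

/-- `∂^α = ∂_1^{α_1} ⋯ ∂_n^{α_n}` as a `K`-linear endomorphism of the polynomial ring. -/
noncomputable def pdOp (K : Type*) [Field K] (n : ℕ) (α : Fin n → ℕ) :
    Module.End K (MvPolynomial (Fin n) K) :=
  (List.ofFn fun j : Fin n =>
    ((MvPolynomial.pderiv j).toLinearMap : Module.End K (MvPolynomial (Fin n) K)) ^ (α j)).prod

/-- The constant coefficient derivation `Σ d_j ∂_j`. -/
noncomputable def delOp (K : Type*) [Field K] (n : ℕ) (d : Fin n → K) :
    Module.End K (MvPolynomial (Fin n) K) :=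
  ∑ j, d j • ((MvPolynomial.pderiv j).toLinearMap : Module.End K (MvPolynomial (Fin n) K))

/-- The `S`-module of differential operators homogeneous of order `m`,
i.e. `S`-linear combinations of the `∂^α` with `|α| = m`. -/
noncomputable def homOrder (K : Type*) [Field K] (n m : ℕ) :
    Submodule (MvPolynomial (Fin n) K) (Module.End K (MvPolynomial (Fin n) K)) :=
  Submodule.span (MvPolynomial (Fin n) K)
    {θ | ∃ α : Fin n → ℕ, (∑ j, α j) = m ∧ θ = pdOp K n α}

/-- The operators preserving the principal ideal `QS`. -/
noncomputable def presIdeal (K : Type*) [Field K] (n : ℕ) (Q : MvPolynomial (Fin n) K) :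
    Submodule (MvPolynomial (Fin n) K) (Module.End K (MvPolynomial (Fin n) K)) where
  carrier := {θ | ∀ f, Q ∣ f → Q ∣ θ f}
  add_mem' := by
    intro θ₁ θ₂ h₁ h₂ f hf
    simpa using dvd_add (h₁ f hf) (h₂ f hf)
  zero_mem' := by intro f hf; simp
  smul_mem' := by
    intro c θ hθ f hf
    simpa [smul_eq_mul] using Dvd.dvd.mul_left (hθ f hf) c

/-- `D^{(m)}(𝒜)`, for the arrangement defined by `Q`. -/
noncomputable def Dmod (K : Type*) [Field K] (n : ℕ) (Q : MvPolynomial (Fin n) K) (m : ℕ) :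
    Submodule (MvPolynomial (Fin n) K) (Module.End K (MvPolynomial (Fin n) K)) :=
  homOrder K n m ⊓ presIdeal K n Q

/-- The Euler operator of order `m`. -/
noncomputable def euler (K : Type*) [Field K] (n m : ℕ) :
    Module.End K (MvPolynomial (Fin n) K) :=
  ∑ α ∈ Finset.Nat.antidiagonalTuple n m,
    ((Nat.multinomial Finset.univ α : MvPolynomial (Fin n) K) *
      ∏ j, MvPolynomial.X j ^ α j) • pdOp K n α

/-- `θ` is homogeneous (of order `m`) of polynomial degree `p`. -/
def homogOfPdeg (K : Type*) [Field K] (n m p : ℕ)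
    (θ : Module.End K (MvPolynomial (Fin n) K)) : Prop :=
  ∃ c : (Fin n → ℕ) → MvPolynomial (Fin n) K,
    (∀ α, (c α).IsHomogeneous p) ∧
    θ = ∑ α ∈ Finset.Nat.antidiagonalTuple n m, c α • pdOp K n α

/-- A generic arrangement: any `n` of the defining linear forms are linearly independent. -/
def Generic {K : Type*} [Field K] {n r : ℕ} (a : Fin r → (Fin n → K)) : Prop :=
  ∀ s : Finset (Fin r), s.card = n → LinearIndependent K (fun i : s => a (i : Fin r))

/-- `P_𝓗 = ∏_{H ∉ 𝓗} p_H`. -/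
noncomputable def PH {K : Type*} [Field K] {n r : ℕ} (a : Fin r → (Fin n → K))
    (H : Finset (Fin r)) : MvPolynomial (Fin n) K :=
  ∏ i ∈ Hᶜ, lf (a i)

/-- `x^α/α!`. -/
noncomputable def monDiv (K : Type*) [Field K] (n : ℕ) (α : Fin n → ℕ) :
    MvPolynomial (Fin n) K :=
  MvPolynomial.C (((∏ j, (α j).factorial : ℕ) : K))⁻¹ * ∏ j, MvPolynomial.X j ^ α j

/-- The `K`-vector space of constant-coefficient operators homogeneous of order `m`,
i.e. `Σ_{|α|=m} K ∂^α`. -/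
noncomputable def constOps (K : Type*) [Field K] (n m : ℕ) :
    Submodule K (Module.End K (MvPolynomial (Fin n) K)) :=
  Submodule.span K {θ | ∃ α : Fin n → ℕ, (∑ j, α j) = m ∧ θ = pdOp K n α}

/-! ### Auxiliary lemmas -/

section ListLemmas

theorem ofFnPow_mul {M : Type*} [Monoid M] :
    ∀ {k : ℕ} (D : Fin k → M), (∀ i j, Commute (D i) (D j)) →
      ∀ α β : Fin k → ℕ,
      (List.ofFn fun j => D j ^ α j).prod * (List.ofFn fun j => D j ^ β j).prod
        = (List.ofFn fun j => D j ^ (α j + β j)).prod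
  | 0, D, _, α, β => by simp
  | k + 1, D, hD, α, β => by
    have tail := ofFnPow_mul (fun j => D j.succ) (fun i j => hD _ _)
      (fun j => α j.succ) (fun j => β j.succ)
    have hc : Commute ((List.ofFn fun j : Fin k => D j.succ ^ α j.succ).prod)
        (D 0 ^ β 0) := by
      apply Commute.list_prod_left
      intro x hx
      rw [List.mem_ofFn] at hx
      obtain ⟨i, rfl⟩ := hx
      exact (hD i.succ 0).pow_pow _ _
    simp only [List.ofFn_succ, List.prod_cons]
    rw [hc.mul_mul_mul_comm, ← pow_add, tail]

theorem ofFnPow_single {M : Type*} [Monoid M] :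
    ∀ {k : ℕ} (D : Fin k → M) (j : Fin k),
      (List.ofFn fun i => D i ^ (if i = j then 1 else 0)).prod = D j
  | 0, _, j => j.elim0
  | k + 1, D, j => by
    induction j using Fin.cases with
    | zero =>
      simp only [List.ofFn_succ, List.prod_cons]
      have h1 : (List.ofFn fun i : Fin k =>
          D i.succ ^ (if i.succ = (0 : Fin (k + 1)) then 1 else 0)).prod = 1 := by
        apply List.prod_eq_one
        intro x hx
        rw [List.mem_ofFn] at hx
        obtain ⟨i, rfl⟩ := hx
        simp [Fin.succ_ne_zero i]
      rw [h1, mul_one]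
      simp
    | succ i =>
      simp only [List.ofFn_succ, List.prod_cons]
      rw [if_neg (fun h => Fin.succ_ne_zero i h.symm), pow_zero, one_mul]
      have hrec := ofFnPow_single (fun t => D t.succ) i
      have hfun : (fun t : Fin k => D t.succ ^ if t.succ = i.succ then 1 else 0)
          = fun t : Fin k => D t.succ ^ if t = i then 1 else 0 := by
        funext t
        simp [Fin.succ_inj]
      rw [hfun]
      exact hrec

end ListLemmas

section PDLemmas

variable {K : Type*} [Field K] {n : ℕ}

theorem pderiv_pderiv_comm (i j : Fin n) (f : MvPolynomial (Fin n) K) :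
    MvPolynomial.pderiv i (MvPolynomial.pderiv j f)
      = MvPolynomial.pderiv j (MvPolynomial.pderiv i f) := by
  induction f using MvPolynomial.induction_on' with
  | monomial u a =>
    rcases eq_or_ne i j with rfl | hij
    · rfl
    · simp only [pderiv_monomial, Finsupp.tsub_apply,
        Finsupp.single_eq_of_ne' hij, Finsupp.single_eq_of_ne' hij.symm, tsub_zero]
      rw [tsub_tsub, tsub_tsub, add_comm (Finsupp.single j 1), mul_right_comm]
  | add p q hp hq => simp [hp, hq]

theorem pderiv_commute (i j : Fin n) :
    Commute ((MvPolynomial.pderiv i).toLinearMap : Module.End K (MvPolynomial (Fin n) K))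
      ((MvPolynomial.pderiv j).toLinearMap) :=
  LinearMap.ext fun f => pderiv_pderiv_comm i j f

theorem pdOp_mul (α β : Fin n → ℕ) :
    pdOp K n α * pdOp K n β = pdOp K n fun j => α j + β j :=
  ofFnPow_mul _ (fun i j => pderiv_commute i j) α β

theorem pdOp_zero : pdOp K n (fun _ => 0) = 1 := by
  apply List.prod_eq_one
  intro x hx
  rw [List.mem_ofFn] at hx
  obtain ⟨i, rfl⟩ := hx
  exact pow_zero _

theorem pdOp_single (j : Fin n) :
    pdOp K n (fun k => if k = j then 1 else 0)
      = ((MvPolynomial.pderiv j).toLinearMap : Module.End K (MvPolynomial (Fin n) K)) :=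
  ofFnPow_single _ j

theorem delOp_pow_mem (d : Fin n → K) (m : ℕ) : delOp K n d ^ m ∈ constOps K n m := by
  induction m with
  | zero =>
    rw [pow_zero]
    exact Submodule.subset_span ⟨fun _ => 0, by simp, pdOp_zero.symm⟩
  | succ m ih =>
    rw [pow_succ']
    have key : ∀ θ ∈ constOps K n m, delOp K n d * θ ∈ constOps K n (m + 1) := by
      intro θ hθ
      refine Submodule.span_induction ?_ ?_ ?_ ?_ hθ
      · rintro θ ⟨α, hα, rfl⟩
        have hrw : delOp K n d * pdOp K n α
            = ∑ j, d j • pdOp K n (fun k => (if k = j then 1 else 0) + α k) := by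
          rw [delOp, Finset.sum_mul]
          refine Finset.sum_congr rfl fun j _ => ?_
          rw [smul_mul_assoc, ← pdOp_single (K := K) j, pdOp_mul]
        rw [hrw]
        refine Submodule.sum_mem _ fun j _ => Submodule.smul_mem _ _
          (Submodule.subset_span ⟨_, ?_, rfl⟩)
        rw [Finset.sum_add_distrib, hα, Finset.sum_ite_eq' Finset.univ j (fun _ => 1),
          if_pos (Finset.mem_univ j), add_comm]
      · rw [mul_zero]; exact Submodule.zero_mem _
      · intro x y _ _ hx hy
        rw [mul_add]; exact Submodule.add_mem _ hx hy
      · intro c x _ hx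
        rw [mul_smul_comm]; exact Submodule.smul_mem _ _ hx
    exact key _ ih

end PDLemmas

section DelLemmas

open MvPolynomial

variable {K : Type*} [Field K] {n : ℕ}

theorem delOp_apply (d : Fin n → K) (f : MvPolynomial (Fin n) K) :
    delOp K n d f = ∑ j, d j • MvPolynomial.pderiv j f := by
  simp [delOp]

theorem delOp_lf (d v : Fin n → K) : delOp K n d (lf v) = C (∑ j, d j * v j) := by
  rw [delOp_apply]
  have hplf : ∀ j : Fin n, MvPolynomial.pderiv j (lf v) = C (v j) := by
    intro j
    rw [lf, map_sum, Finset.sum_eq_single j]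
    · rw [pderiv_C_mul, pderiv_X_self, mul_one]
    · intro k _ hk
      rw [pderiv_C_mul, pderiv_X_of_ne hk, mul_zero]
    · intro h; exact absurd (Finset.mem_univ j) h
  simp_rw [hplf, MvPolynomial.smul_eq_C_mul, ← C_mul, ← map_sum]

theorem delOp_one' (d : Fin n → K) : delOp K n d (1 : MvPolynomial (Fin n) K) = 0 := by
  rw [delOp_apply]
  simp

theorem delOp_mul_poly (d : Fin n → K) (f g : MvPolynomial (Fin n) K) :
    delOp K n d (f * g) = f * delOp K n d g + g * delOp K n d f := by
  simp only [delOp_apply, pderiv_mul, smul_add, Finset.sum_add_distrib, Finset.mul_sum,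
    mul_smul_comm]
  rw [add_comm]
  congr 1
  exact Finset.sum_congr rfl fun j _ => by rw [mul_comm]

theorem delOp_prod {ι : Type*} [DecidableEq ι] (d : Fin n → K) (s : Finset ι)
    (f : ι → MvPolynomial (Fin n) K) :
    delOp K n d (∏ i ∈ s, f i)
      = ∑ i ∈ s, delOp K n d (f i) * ∏ j ∈ s.erase i, f j := by
  induction s using Finset.induction_on with
  | empty => simp [delOp_one']
  | insert c s' h ih =>
    rw [Finset.prod_insert h, delOp_mul_poly, ih, Finset.sum_insert h,
      Finset.erase_insert h, add_comm, Finset.mul_sum]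
    congr 1
    · exact mul_comm _ _
    · refine Finset.sum_congr rfl fun i hi => ?_
      rw [Finset.erase_insert_of_ne (fun hci => h (by rw [hci]; exact hi)),
        Finset.prod_insert (fun ha' => h (Finset.mem_of_mem_erase ha'))]
      ring

theorem delOp_pow_prod {ι : Type*} [DecidableEq ι] (d : Fin n → K) :
    ∀ (k : ℕ) (s : Finset ι) (b : ι → Fin n → K), s.card = k →
      (delOp K n d ^ k) (∏ i ∈ s, lf (b i))
        = C ((k.factorial : K) * ∏ i ∈ s, ∑ j, d j * b i j) := by
  intro k
  induction k with
  | zero =>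
    intro s b hs
    rw [Finset.card_eq_zero] at hs
    subst hs
    simp
  | succ k ih =>
    intro s b hs
    rw [pow_succ, Module.End.mul_apply, delOp_prod, map_sum]
    have hterm : ∀ i ∈ s,
        (delOp K n d ^ k) (delOp K n d (lf (b i)) * ∏ j ∈ s.erase i, lf (b j))
          = C ((k.factorial : K) * ∏ i' ∈ s, ∑ j, d j * b i' j) := by
      intro i hi
      rw [delOp_lf, ← MvPolynomial.smul_eq_C_mul, map_smul,
        ih (s.erase i) b (by rw [Finset.card_erase_of_mem hi, hs]; rfl),
        MvPolynomial.smul_eq_C_mul, ← C_mul, ← Finset.mul_prod_erase s _ hi]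
      congr 1
      ring
    rw [Finset.sum_congr rfl hterm, Finset.sum_const, hs, ← map_nsmul, nsmul_eq_mul]
    congr 1
    push_cast [Nat.factorial_succ]
    ring

end DelLemmas

section CardLemma

theorem card_antidiagonalTuple (k m : ℕ) :
    (Finset.Nat.antidiagonalTuple k m).card = (k + m - 1).choose m := by
  classical
  have e1 : {x // x ∈ Finset.Nat.antidiagonalTuple k m} ≃ {α : Fin k → ℕ // ∑ j, α j = m} :=
    Equiv.subtypeEquivRight fun x => Finset.Nat.mem_antidiagonalTuple
  have e2 : {α : Fin k → ℕ // ∑ j, α j = m}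
      ≃ {P : Fin k →₀ ℕ // P.sum (fun _ => id) = m} :=
    Finsupp.equivFunOnFinite.symm.subtypeEquiv fun α => by
      rw [Finsupp.sum_fintype _ _ (fun _ => rfl)]
      simp [Finsupp.equivFunOnFinite]
  have e3 : {P : Fin k →₀ ℕ // P.sum (fun _ => id) = m} ≃ Sym (Fin k) m :=
    (Sym.equivNatSum (Fin k) m).symm
  calc (Finset.Nat.antidiagonalTuple k m).card
      = Fintype.card {x // x ∈ Finset.Nat.antidiagonalTuple k m} := (Fintype.card_coe _).symm
    _ = Fintype.card (Sym (Fin k) m) := Fintype.card_congr ((e1.trans e2).trans e3)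
    _ = (k + m - 1).choose m := by rw [Sym.card_sym_eq_choose, Fintype.card_fin]

end CardLemma
set_option maxHeartbeats 1000000 in
set_option synthInstance.maxHeartbeats 400000 in
/-- for a generic arrangement with `r ≥ n`,
`{δ_𝓗^{r-n+1}}` is a `K`-basis of `Σ_{|α|=r-n+1} K∂^α` and `{P_𝓗}` is a `K`-basis of
the space of homogeneous polynomials of degree `r-n+1`. -/
theorem dual_bases_of_generic
    {K : Type*} [Field K] [CharZero K] {n r : ℕ}
    (hn : 2 ≤ n) (hr : n ≤ r)
    (a : Fin r → (Fin n → K)) (hgen : Generic a)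
    (δ : Finset (Fin r) → (Fin n → K))
    (hδ0 : ∀ H : Finset (Fin r), H.card = n - 1 → δ H ≠ 0)
    (hδ : ∀ H : Finset (Fin r), H.card = n - 1 → ∀ i ∈ H, delOp K n (δ H) (lf (a i)) = 0) :
    (∃ b : Module.Basis {s : Finset (Fin r) // s.card = n - 1} K ↥(constOps K n (r - n + 1)),
        ∀ H, (b H : Module.End K (MvPolynomial (Fin n) K)) = delOp K n (δ H) ^ (r - n + 1))
    ∧ (∃ b : Module.Basis {s : Finset (Fin r) // s.card = n - 1} K
          ↥(MvPolynomial.homogeneousSubmodule (Fin n) K (r - n + 1)),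
        ∀ H, (b H : MvPolynomial (Fin n) K) = PH a H) := by
  classical
  set m := r - n + 1 with hm
  set c : Finset (Fin r) → Fin r → K := fun H i => ∑ j, δ H j * a i j with hcdef
  have hccompl : ∀ H : Finset (Fin r), H.card = n - 1 → Hᶜ.card = m := by
    intro H hH
    rw [Finset.card_compl, hH, Fintype.card_fin]
    omega
  have hδc : ∀ H : Finset (Fin r), H.card = n - 1 → ∀ i ∈ H, c H i = 0 := by
    intro H hH i hi
    have h1 := hδ H hH i hi
    rw [delOp_lf] at h1
    exact MvPolynomial.C_eq_zero.1 h1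
  have hkey : ∀ H H' : Finset (Fin r), H'.card = n - 1 →
      (delOp K n (δ H) ^ m) (PH a H')
        = MvPolynomial.C ((m.factorial : K) * ∏ i ∈ H'ᶜ, c H i) :=
    fun H H' hH' => delOp_pow_prod (δ H) m H'ᶜ (fun i => a i) (hccompl H' hH')
  -- diagonal entries are nonzero
  have hdiag : ∀ H : Finset (Fin r), H.card = n - 1 → ∀ i ∈ Hᶜ, c H i ≠ 0 := by
    intro H hH i hi h0
    have hiH : i ∉ H := Finset.mem_compl.1 hi
    have htc : (insert i H).card = n := by
      rw [Finset.card_insert_of_notMem hiH, hH]; omega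
    have hli := hgen (insert i H) htc
    let φ : (Fin n → K) →ₗ[K] K :=
      { toFun := fun v => ∑ j, δ H j * v j
        map_add' := fun x y => by simp [mul_add, Finset.sum_add_distrib]
        map_smul' := fun cc x => by simp [Finset.mul_sum, smul_eq_mul, mul_left_comm] }
    have hvanish : ∀ x : (insert i H : Finset (Fin r)), φ (a (x : Fin r)) = 0 := by
      rintro ⟨j, hj⟩
      rcases Finset.mem_insert.1 hj with rfl | hjH
      · exact h0
      · exact hδc H hH j hjH
    have hspan : Submodule.span K
        (Set.range fun x : (insert i H : Finset (Fin r)) => a (x : Fin r)) = ⊤ := by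
      haveI : Nonempty {x // x ∈ insert i H} := ⟨⟨i, Finset.mem_insert_self i H⟩⟩
      apply hli.span_eq_top_of_card_eq_finrank
      rw [Fintype.card_coe, htc, Module.finrank_fintype_fun_eq_card, Fintype.card_fin]
    have hφ0 : ∀ v, φ v = 0 := by
      intro v
      have hv : v ∈ Submodule.span K
          (Set.range fun x : (insert i H : Finset (Fin r)) => a (x : Fin r)) := by
        rw [hspan]; trivial
      refine Submodule.span_induction ?_ ?_ ?_ ?_ hv
      · rintro _ ⟨x, rfl⟩; exact hvanish x
      · simp
      · intro x y _ _ hx hy; rw [map_add, hx, hy, add_zero]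
      · intro cc x _ hx; rw [map_smul, hx, smul_zero]
    apply hδ0 H hH
    funext k
    have hk := hφ0 (Pi.single k 1)
    simpa [φ, Pi.single_apply, mul_ite, Finset.sum_ite_eq'] using hk
  -- off-diagonal entries vanish
  have hoff : ∀ H H' : Finset (Fin r), H.card = n - 1 → H'.card = n - 1 → H ≠ H' →
      ∏ i ∈ H'ᶜ, c H i = 0 := by
    intro H H' hH hH' hne
    have hns : ¬ H ⊆ H' := fun hsub =>
      hne (Finset.eq_of_subset_of_card_le hsub (by rw [hH, hH']))
    obtain ⟨i, hiH, hiH'⟩ := Finset.not_subset.1 hns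
    exact Finset.prod_eq_zero (Finset.mem_compl.2 hiH') (hδc H hH i hiH)
  have hmfac : (m.factorial : K) ≠ 0 := Nat.cast_ne_zero.2 (Nat.factorial_ne_zero m)
  have hdiagval : ∀ H : Finset (Fin r), H.card = n - 1 →
      (m.factorial : K) * ∏ i ∈ Hᶜ, c H i ≠ 0 :=
    fun H hH => mul_ne_zero hmfac (Finset.prod_ne_zero_iff.2 fun i hi => hdiag H hH i hi)
  have ccsmul : ∀ (g : K) (p : MvPolynomial (Fin n) K),
      MvPolynomial.constantCoeff (g • p) = g * MvPolynomial.constantCoeff p := fun g p => by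
    rw [MvPolynomial.smul_eq_C_mul, map_mul, MvPolynomial.constantCoeff_C]
  -- linear independence of the two families, in the ambient spaces
  have li1 : LinearIndependent K
      (fun H : {s : Finset (Fin r) // s.card = n - 1} =>
        delOp K n (δ (H : Finset (Fin r))) ^ m) := by
    refine Fintype.linearIndependent_iff.2 fun g hg H' => ?_
    have h2 := congrArg (fun θ : Module.End K (MvPolynomial (Fin n) K) =>
      MvPolynomial.constantCoeff (θ (PH a (H' : Finset (Fin r))))) hg
    simp only [LinearMap.sum_apply, LinearMap.smul_apply, LinearMap.zero_apply, map_zero,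
      map_sum] at h2
    have h3 : ∀ H : {s : Finset (Fin r) // s.card = n - 1},
        MvPolynomial.constantCoeff (g H •
          (delOp K n (δ (H : Finset (Fin r))) ^ m) (PH a (H' : Finset (Fin r))))
          = g H * ((m.factorial : K) * ∏ i ∈ ((H' : Finset (Fin r)))ᶜ, c (H : Finset (Fin r)) i) := by
      intro H
      rw [hkey _ _ H'.2, ccsmul, MvPolynomial.constantCoeff_C]
    rw [Finset.sum_congr rfl fun H _ => h3 H] at h2
    rw [Fintype.sum_eq_single H' fun H hne => by
      rw [hoff _ _ H.2 H'.2 fun hEq => hne (Subtype.ext hEq), mul_zero, mul_zero]] at h2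
    exact (mul_eq_zero.1 h2).resolve_right (hdiagval _ H'.2)
  have li2 : LinearIndependent K
      (fun H : {s : Finset (Fin r) // s.card = n - 1} => PH a (H : Finset (Fin r))) := by
    refine Fintype.linearIndependent_iff.2 fun g hg H => ?_
    have h2 := congrArg (fun p : MvPolynomial (Fin n) K =>
      MvPolynomial.constantCoeff ((delOp K n (δ (H : Finset (Fin r))) ^ m) p)) hg
    simp only [map_sum, map_smul, map_zero] at h2
    have h3 : ∀ H' : {s : Finset (Fin r) // s.card = n - 1},
        MvPolynomial.constantCoeff (g H' •
          (delOp K n (δ (H : Finset (Fin r))) ^ m) (PH a (H' : Finset (Fin r))))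
          = g H' * ((m.factorial : K) * ∏ i ∈ ((H' : Finset (Fin r)))ᶜ, c (H : Finset (Fin r)) i) := by
      intro H'
      rw [hkey _ _ H'.2, ccsmul, MvPolynomial.constantCoeff_C]
    rw [Finset.sum_congr rfl fun H' _ => h3 H'] at h2
    rw [Fintype.sum_eq_single H fun H' hne => by
      rw [hoff _ _ H.2 H'.2 fun hEq => hne (Subtype.ext hEq.symm), mul_zero, mul_zero]] at h2
    exact (mul_eq_zero.1 h2).resolve_right (hdiagval _ H.2)
  -- cardinalities
  have hADT : (Finset.Nat.antidiagonalTuple n m).card = r.choose (n - 1) := by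
    rw [card_antidiagonalTuple]
    have h1 : n + m - 1 = r := by omega
    rw [h1, ← Nat.choose_symm (show m ≤ r by omega)]
    congr 1
    omega
  have hcardI : Fintype.card {s : Finset (Fin r) // s.card = n - 1} = r.choose (n - 1) := by
    rw [Fintype.card_finset_len, Fintype.card_fin]
  -- dimension bounds
  have hset1 : {θ : Module.End K (MvPolynomial (Fin n) K) |
      ∃ α : Fin n → ℕ, (∑ j, α j) = m ∧ θ = pdOp K n α}
      = ↑((Finset.Nat.antidiagonalTuple n m).image (pdOp K n)) := by
    ext θ
    simp only [Set.mem_setOf_eq, Finset.coe_image, Set.mem_image, Finset.mem_coe,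
      Finset.Nat.mem_antidiagonalTuple]
    exact ⟨fun ⟨α, h1, h2⟩ => ⟨α, h1, h2.symm⟩, fun ⟨α, h1, h2⟩ => ⟨α, h1, h2.symm⟩⟩
  have hco : constOps K n m = Submodule.span K
      ↑((Finset.Nat.antidiagonalTuple n m).image (pdOp K n)) := by
    rw [constOps, hset1]
  haveI hfd1 : FiniteDimensional K (constOps K n m) := by
    rw [hco]
    exact FiniteDimensional.span_of_finite K (Set.toFinite _)
  have hdim1 : Module.finrank K (constOps K n m) ≤ r.choose (n - 1) := by
    rw [hco]
    exact le_trans (finrank_span_finset_le_card _)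
      (le_trans (Finset.card_image_le) (le_of_eq hADT))
  have hlf : ∀ v : Fin n → K, (lf v).IsHomogeneous 1 := by
    intro v
    rw [lf]
    apply MvPolynomial.IsHomogeneous.sum
    intro j _
    simpa using (MvPolynomial.isHomogeneous_C (Fin n) (v j)).mul
      (MvPolynomial.isHomogeneous_X K j)
  have hhomle : MvPolynomial.homogeneousSubmodule (Fin n) K m ≤ Submodule.span K
      ↑((Finset.Nat.antidiagonalTuple n m).image
        (fun α : Fin n → ℕ => ∏ j, (MvPolynomial.X j : MvPolynomial (Fin n) K) ^ α j)) := by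
    intro p hp
    rw [MvPolynomial.mem_homogeneousSubmodule] at hp
    rw [MvPolynomial.as_sum p]
    refine Submodule.sum_mem _ fun v hv => ?_
    have hvd : v.degree = m := by
      by_contra hne
      exact MvPolynomial.mem_support_iff.1 hv (hp.coeff_eq_zero hne)
    have hvs : ∑ j, v j = m := by
      rw [← hvd]
      exact (Finset.sum_subset (Finset.subset_univ _) fun x _ hx =>
        Finsupp.notMem_support_iff.1 hx).symm
    have hmon : (MvPolynomial.monomial v) (MvPolynomial.coeff v p)
        = MvPolynomial.coeff v p • ∏ j, (MvPolynomial.X j : MvPolynomial (Fin n) K) ^ v j := by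
      rw [MvPolynomial.smul_eq_C_mul, MvPolynomial.monomial_eq]
      congr 1
      rw [Finsupp.prod_fintype]
      intro j; exact pow_zero _
    rw [hmon]
    refine Submodule.smul_mem _ _ (Submodule.subset_span ?_)
    exact Finset.mem_coe.2 (Finset.mem_image.2
      ⟨(v : Fin n → ℕ), Finset.Nat.mem_antidiagonalTuple.2 hvs, rfl⟩)
  haveI hfd2 : FiniteDimensional K (MvPolynomial.homogeneousSubmodule (Fin n) K m) := by
    haveI : FiniteDimensional K (Submodule.span K
        (((Finset.Nat.antidiagonalTuple n m).image
          (fun α : Fin n → ℕ => ∏ j, (MvPolynomial.X j : MvPolynomial (Fin n) K) ^ α j) :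
            Finset (MvPolynomial (Fin n) K)) : Set (MvPolynomial (Fin n) K))) :=
      FiniteDimensional.span_of_finite K (Set.toFinite _)
    exact Submodule.finiteDimensional_of_le hhomle
  have hdim2 : Module.finrank K (MvPolynomial.homogeneousSubmodule (Fin n) K m)
      ≤ r.choose (n - 1) := by
    haveI : FiniteDimensional K (Submodule.span K
        (((Finset.Nat.antidiagonalTuple n m).image
          (fun α : Fin n → ℕ => ∏ j, (MvPolynomial.X j : MvPolynomial (Fin n) K) ^ α j) :
            Finset (MvPolynomial (Fin n) K)) : Set (MvPolynomial (Fin n) K))) :=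
      FiniteDimensional.span_of_finite K (Set.toFinite _)
    exact le_trans (Submodule.finrank_mono hhomle)
      (le_trans (finrank_span_finset_le_card _)
        (le_trans (Finset.card_image_le) (le_of_eq hADT)))
  -- memberships
  have mem2 : ∀ H : {s : Finset (Fin r) // s.card = n - 1},
      PH a (H : Finset (Fin r)) ∈ MvPolynomial.homogeneousSubmodule (Fin n) K m := by
    intro H
    rw [MvPolynomial.mem_homogeneousSubmodule, PH]
    have hpr := MvPolynomial.IsHomogeneous.prod ((H : Finset (Fin r)))ᶜ
      (fun i => lf (a i)) (fun _ => 1) (fun i _ => hlf (a i))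
    simpa [Finset.sum_const, hccompl _ H.2] using hpr
  -- spans
  have hsp1 : Submodule.span K (Set.range fun H : {s : Finset (Fin r) // s.card = n - 1} =>
      delOp K n (δ (H : Finset (Fin r))) ^ m) = constOps K n m := by
    apply Submodule.eq_of_le_of_finrank_le
    · rw [Submodule.span_le]
      rintro _ ⟨H, rfl⟩
      exact delOp_pow_mem _ m
    · calc Module.finrank K (constOps K n m) ≤ r.choose (n - 1) := hdim1
        _ = Fintype.card {s : Finset (Fin r) // s.card = n - 1} := hcardI.symm
        _ = _ := (finrank_span_eq_card li1).symm
  have hsp2 : Submodule.span K (Set.range fun H : {s : Finset (Fin r) // s.card = n - 1} =>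
      PH a (H : Finset (Fin r))) = MvPolynomial.homogeneousSubmodule (Fin n) K m := by
    apply Submodule.eq_of_le_of_finrank_le
    · rw [Submodule.span_le]
      rintro _ ⟨H, rfl⟩
      exact mem2 H
    · calc Module.finrank K (MvPolynomial.homogeneousSubmodule (Fin n) K m)
          ≤ r.choose (n - 1) := hdim2
        _ = Fintype.card {s : Finset (Fin r) // s.card = n - 1} := hcardI.symm
        _ = _ := (finrank_span_eq_card li2).symm
  refine ⟨⟨(Module.Basis.span li1).map (LinearEquiv.ofEq _ _ hsp1), fun H => ?_⟩,
    ⟨(Module.Basis.span li2).map (LinearEquiv.ofEq _ _ hsp2), fun H => ?_⟩⟩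
  · rw [Module.Basis.map_apply]
    rw [show ((LinearEquiv.ofEq _ _ hsp1) (Module.Basis.span li1 H) :
        Module.End K (MvPolynomial (Fin n) K)) = ((Module.Basis.span li1 H : _) :
        Module.End K (MvPolynomial (Fin n) K)) from rfl]
    exact congrArg Subtype.val (Module.Basis.span_apply li1 H)
  · rw [Module.Basis.map_apply]
    rw [show ((LinearEquiv.ofEq _ _ hsp2) (Module.Basis.span li2 H) :
        MvPolynomial (Fin n) K) = ((Module.Basis.span li2 H : _) :
        MvPolynomial (Fin n) K) from rfl]
    exact congrArg Subtype.val (Module.Basis.span_apply li2 H)
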